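/- Let H be a Hopf algebra with invertible antipode and P ∈ H a right group-like projection (P² = P ≠ 0, Δ(P)(1 ⊗ P) = (1 ⊗ P)Δ(P) = P ⊗ P). Suppose the coideal subalgebra V_P is a Frobenius algebra with cyclic element y ∈ _P V for the right action a ↦ S(a)y, let ι_y : _P V → V_P be the inverse bijection ι_y(S(a)y) = a, and set z_y = P₍₂₎ ι_y(P₍₁₎) ∈ V_P (Sweedler notation). Then z_y is a central element of V_P, and if z_y is invertible in V_P, then every right V_P-module is completely reducible; in particular V_P is a semisimple algebra. -/

import Mathlib

set_option maxHeartbeats 1600000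
set_option synthInstance.maxHeartbeats 1000000

open scoped TensorProduct
open TensorProduct LinearMap Coalgebra

section Helpers
variable {k H : Type*} [Field k] [Ring H] [HopfAlgebra k H]

noncomputable def tril3 (f g h : H →ₗ[k] H) : H ⊗[k] (H ⊗[k] H) →ₗ[k] H :=
  TensorProduct.lift ((((LinearMap.llcomp k (H ⊗[k] H) H H).flip
      (TensorProduct.lift ((LinearMap.mul k H).compl₁₂ g h))) ∘ₗ (LinearMap.mul k H) ∘ₗ f))

@[simp] lemma tril3_tmul (f g h : H →ₗ[k] H) (u v w : H) :
    tril3 f g h (u ⊗ₜ[k] (v ⊗ₜ[k] w)) = f u * (g v * h w) := by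
  simp [tril3]

private lemma sum4_swap {α β M : Type*} {γ : α → Type*} {δ : β → Type*} [AddCommMonoid M]
    {s : Finset α} {t : Finset β}
    {A : ∀ i, Finset (γ i)} {B : ∀ j, Finset (δ j)} (f : ∀ i j, γ i → δ j → M) :
    ∑ i ∈ s, ∑ j ∈ t, ∑ m ∈ A i, ∑ n ∈ B j, f i j m n
      = ∑ j ∈ t, ∑ n ∈ B j, ∑ i ∈ s, ∑ m ∈ A i, f i j m n := by
  calc ∑ i ∈ s, ∑ j ∈ t, ∑ m ∈ A i, ∑ n ∈ B j, f i j m n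
      = ∑ j ∈ t, ∑ i ∈ s, ∑ m ∈ A i, ∑ n ∈ B j, f i j m n := Finset.sum_comm
    _ = ∑ j ∈ t, ∑ i ∈ s, ∑ n ∈ B j, ∑ m ∈ A i, f i j m n :=
        Finset.sum_congr rfl fun j _ => Finset.sum_congr rfl fun i _ => Finset.sum_comm
    _ = ∑ j ∈ t, ∑ n ∈ B j, ∑ i ∈ s, ∑ m ∈ A i, f i j m n :=
        Finset.sum_congr rfl fun j _ => Finset.sum_comm

private lemma sum4_swap' {α β M : Type*} {γ : α → Type*} {δ : β → Type*} [AddCommMonoid M]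
    {s : Finset α} {t : Finset β}
    {A : ∀ i, Finset (γ i)} {B : ∀ j, Finset (δ j)} (f : ∀ i j, γ i → δ j → M) :
    ∑ j ∈ t, ∑ n ∈ B j, ∑ i ∈ s, ∑ m ∈ A i, f i j m n
      = ∑ i ∈ s, ∑ m ∈ A i, ∑ j ∈ t, ∑ n ∈ B j, f i j m n := by
  calc ∑ j ∈ t, ∑ n ∈ B j, ∑ i ∈ s, ∑ m ∈ A i, f i j m n
      = ∑ j ∈ t, ∑ i ∈ s, ∑ n ∈ B j, ∑ m ∈ A i, f i j m n :=
        Finset.sum_congr rfl fun j _ => Finset.sum_comm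
    _ = ∑ j ∈ t, ∑ i ∈ s, ∑ m ∈ A i, ∑ n ∈ B j, f i j m n :=
        Finset.sum_congr rfl fun j _ => Finset.sum_congr rfl fun i _ => Finset.sum_comm
    _ = ∑ i ∈ s, ∑ j ∈ t, ∑ m ∈ A i, ∑ n ∈ B j, f i j m n := Finset.sum_comm
    _ = ∑ i ∈ s, ∑ m ∈ A i, ∑ j ∈ t, ∑ n ∈ B j, f i j m n :=
        Finset.sum_congr rfl fun i _ => Finset.sum_comm

noncomputable def mulRepr {a b : H} {ιa ιb : Type*} (ra : Coalgebra.Repr k a ιa)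
    (rb : Coalgebra.Repr k b ιb) :
    Coalgebra.Repr k (a * b) (ιa × ιb) where
  index := ra.index ×ˢ rb.index
  left := fun p => ra.left p.1 * rb.left p.2
  right := fun p => ra.right p.1 * rb.right p.2
  eq := by
    rw [show CoalgebraStruct.comul (R := k) (a * b) = Coalgebra.comul (R := k) (a*b) from rfl,
      Bialgebra.comul_mul, ← ra.eq, ← rb.eq, Finset.sum_mul_sum, Finset.sum_product]
    simp [Algebra.TensorProduct.tmul_mul_tmul]

lemma repr_sum_smul_left {v : H} {ιv : Type*} (rv : Coalgebra.Repr k v ιv) :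
    ∑ i ∈ rv.index, Coalgebra.counit (R := k) (rv.left i) • rv.right i = v := by
  have h := Coalgebra.sum_counit_tmul_eq (R := k) rv
  calc ∑ i ∈ rv.index, Coalgebra.counit (R := k) (rv.left i) • rv.right i
      = TensorProduct.lid k H (∑ i ∈ rv.index,
          Coalgebra.counit (R := k) (rv.left i) ⊗ₜ[k] rv.right i) := by rw [map_sum]; simp
    _ = TensorProduct.lid k H (1 ⊗ₜ[k] v) := by rw [h]
    _ = v := by simp

lemma repr_sum_smul_right {v : H} {ιv : Type*} (rv : Coalgebra.Repr k v ιv) :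
    ∑ i ∈ rv.index, Coalgebra.counit (R := k) (rv.right i) • rv.left i = v := by
  have h := Coalgebra.sum_tmul_counit_eq (R := k) rv
  calc ∑ i ∈ rv.index, Coalgebra.counit (R := k) (rv.right i) • rv.left i
      = TensorProduct.rid k H (∑ i ∈ rv.index,
          rv.left i ⊗ₜ[k] Coalgebra.counit (R := k) (rv.right i)) := by rw [map_sum]; simp
    _ = TensorProduct.rid k H (v ⊗ₜ[k] 1) := by rw [h]
    _ = v := by simp

/-- key collapsing lemma: `∑ x * (v₁ * (S v₂ * w)) = ε v • (x * w)`. -/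
lemma helper_collapse (x w : H) {v : H} {ιv : Type*} (rv : Coalgebra.Repr k v ιv) :
    ∑ n ∈ rv.index, x * (rv.left n * (HopfAlgebra.antipode (R := k) (rv.right n) * w))
      = Coalgebra.counit (R := k) v • (x * w) := by
  calc ∑ n ∈ rv.index, x * (rv.left n * (HopfAlgebra.antipode (R := k) (rv.right n) * w))
      = x * ((∑ n ∈ rv.index,
          rv.left n * HopfAlgebra.antipode (R := k) (rv.right n)) * w) := by
        rw [Finset.sum_mul, Finset.mul_sum]; simp [mul_assoc]
    _ = x * (algebraMap k H (Coalgebra.counit (R := k) v) * w) := by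
        rw [HopfAlgebra.sum_mul_antipode_eq_algebraMap_counit]
    _ = Coalgebra.counit (R := k) v • (x * w) := by
        rw [← Algebra.smul_def, mul_smul_comm]

/-- the symmetric one: `∑ (S v₁ * v₂) ... ` not needed; instead the antipode-first version
  for products of the form `∑ S(v₁) * v₂` is `HopfAlgebra.sum_antipode_mul_eq`. -/

theorem antipode_mul' (a b : H) :
    HopfAlgebra.antipode (R := k) (a * b) =
      HopfAlgebra.antipode (R := k) b * HopfAlgebra.antipode (R := k) a := by
  have ra := ℛ k a
  have rb := ℛ k b
  have rra : ∀ i : ra.ι, Coalgebra.Repr k (ra.right i) (H × H) := fun i => ℛ k _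
  have rla : ∀ i : ra.ι, Coalgebra.Repr k (ra.left i) (H × H) := fun i => ℛ k _
  have rrb : ∀ j : rb.ι, Coalgebra.Repr k (rb.right j) (H × H) := fun j => ℛ k _
  have rlb : ∀ j : rb.ι, Coalgebra.Repr k (rb.left j) (H × H) := fun j => ℛ k _
  set S : H →ₗ[k] H := HopfAlgebra.antipode (R := k) with hSdef
  -- the master sum
  set X : H := ∑ i ∈ ra.index, ∑ j ∈ rb.index, ∑ m ∈ (rra i).index, ∑ n ∈ (rrb j).index,
      S (ra.left i * rb.left j) *
        (((rra i).left m * (rrb j).left n) *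
          (S ((rrb j).right n) * S ((rra i).right m))) with hXdef
  have claimA : X = S (a * b) := by
    have step1 : X = ∑ i ∈ ra.index, ∑ j ∈ rb.index,
        Coalgebra.counit (R := k) (rb.right j) •
          (Coalgebra.counit (R := k) (ra.right i) • S (ra.left i * rb.left j)) := by
      rw [hXdef]
      refine Finset.sum_congr rfl fun i _ => Finset.sum_congr rfl fun j _ => ?_
      calc ∑ m ∈ (rra i).index, ∑ n ∈ (rrb j).index,
            S (ra.left i * rb.left j) *
              (((rra i).left m * (rrb j).left n) *
                (S ((rrb j).right n) * S ((rra i).right m)))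
          = ∑ m ∈ (rra i).index, Coalgebra.counit (R := k) (rb.right j) •
              ((S (ra.left i * rb.left j) * (rra i).left m) * S ((rra i).right m)) := by
            refine Finset.sum_congr rfl fun m _ => ?_
            rw [show (∑ n ∈ (rrb j).index,
                S (ra.left i * rb.left j) *
                  (((rra i).left m * (rrb j).left n) *
                    (S ((rrb j).right n) * S ((rra i).right m))))
              = ∑ n ∈ (rrb j).index,
                (S (ra.left i * rb.left j) * (rra i).left m) *
                  ((rrb j).left n * (S ((rrb j).right n) * S ((rra i).right m))) from
              Finset.sum_congr rfl fun n _ => by simp [mul_assoc]]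
            exact helper_collapse _ _ (rrb j)
        _ = Coalgebra.counit (R := k) (rb.right j) •
              (Coalgebra.counit (R := k) (ra.right i) • S (ra.left i * rb.left j)) := by
            rw [← Finset.smul_sum]
            congr 1
            calc ∑ m ∈ (rra i).index,
                  (S (ra.left i * rb.left j) * (rra i).left m) * S ((rra i).right m)
                = S (ra.left i * rb.left j) * ∑ m ∈ (rra i).index,
                    (rra i).left m * S ((rra i).right m) := by
                  rw [Finset.mul_sum]; simp [mul_assoc]
              _ = S (ra.left i * rb.left j) *
                    algebraMap k H (Coalgebra.counit (R := k) (ra.right i)) := by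
                  rw [HopfAlgebra.sum_mul_antipode_eq_algebraMap_counit]
              _ = Coalgebra.counit (R := k) (ra.right i) • S (ra.left i * rb.left j) := by
                  rw [← Algebra.commutes, ← Algebra.smul_def]
    rw [step1]
    conv_rhs => rw [← repr_sum_smul_right ra, ← repr_sum_smul_right rb]
    rw [Finset.sum_mul_sum, map_sum]
    refine Finset.sum_congr rfl fun i _ => ?_
    rw [map_sum]
    refine Finset.sum_congr rfl fun j _ => ?_
    rw [smul_mul_assoc, mul_smul_comm, map_smul, map_smul, smul_comm]
  have claimB : X = S b * S a := by
    have hreord1 : X = ∑ j ∈ rb.index, ∑ n ∈ (rrb j).index, ∑ i ∈ ra.index,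
        ∑ m ∈ (rra i).index,
        S (ra.left i * rb.left j) *
          (((rra i).left m * (rrb j).left n) *
            (S ((rrb j).right n) * S ((rra i).right m))) := by
      rw [hXdef]
      exact sum4_swap (fun i j m n => S (ra.left i * rb.left j) *
        (((rra i).left m * (rrb j).left n) * (S ((rrb j).right n) * S ((rra i).right m))))
    have hB1 : X = ∑ j ∈ rb.index, ∑ n ∈ (rrb j).index, ∑ i ∈ ra.index,
        ∑ q ∈ (rla i).index,
        S ((rla i).left q * rb.left j) *
          ((((rla i).right q) * (rrb j).left n) *
            (S ((rrb j).right n) * S (ra.right i))) := by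
      rw [hreord1]
      refine Finset.sum_congr rfl fun j _ => Finset.sum_congr rfl fun n _ => ?_
      have hmap := congrArg (tril3 (k := k) (S ∘ₗ LinearMap.mulRight k (rb.left j))
          (LinearMap.mulRight k ((rrb j).left n))
          (LinearMap.mulLeft k (S ((rrb j).right n)) ∘ₗ S))
        (Coalgebra.sum_tmul_tmul_eq (R := k) ra rla rra)
      rw [map_sum, map_sum] at hmap
      simp only [map_sum, tril3_tmul, LinearMap.coe_comp, Function.comp_apply,
        LinearMap.mulRight_apply, LinearMap.mulLeft_apply] at hmap
      exact hmap.symm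
    have hreord2 : X = ∑ i ∈ ra.index, ∑ q ∈ (rla i).index, ∑ j ∈ rb.index,
        ∑ n ∈ (rrb j).index,
        S ((rla i).left q * rb.left j) *
          ((((rla i).right q) * (rrb j).left n) *
            (S ((rrb j).right n) * S (ra.right i))) := by
      rw [hB1]
      exact sum4_swap' (fun i j q n => S ((rla i).left q * rb.left j) *
        (((rla i).right q * (rrb j).left n) * (S ((rrb j).right n) * S (ra.right i))))
    have hB2 : X = ∑ i ∈ ra.index, ∑ q ∈ (rla i).index, ∑ j ∈ rb.index,
        ∑ r ∈ (rlb j).index,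
        S ((rla i).left q * (rlb j).left r) *
          ((((rla i).right q) * (rlb j).right r) *
            (S (rb.right j) * S (ra.right i))) := by
      rw [hreord2]
      refine Finset.sum_congr rfl fun i _ => Finset.sum_congr rfl fun q _ => ?_
      have hmap := congrArg (tril3 (k := k) (S ∘ₗ LinearMap.mulLeft k ((rla i).left q))
          (LinearMap.mulLeft k ((rla i).right q))
          (LinearMap.mulRight k (S (ra.right i)) ∘ₗ S))
        (Coalgebra.sum_tmul_tmul_eq (R := k) rb rlb rrb)
      rw [map_sum, map_sum] at hmap
      simp only [map_sum, tril3_tmul, LinearMap.coe_comp, Function.comp_apply,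
        LinearMap.mulRight_apply, LinearMap.mulLeft_apply] at hmap
      exact hmap.symm
    have hB3 : X = ∑ i ∈ ra.index, ∑ j ∈ rb.index,
        (Coalgebra.counit (R := k) (ra.left i) * Coalgebra.counit (R := k) (rb.left j)) •
          (S (rb.right j) * S (ra.right i)) := by
      rw [hB2]
      refine Finset.sum_congr rfl fun i _ => ?_
      rw [Finset.sum_comm]
      refine Finset.sum_congr rfl fun j _ => ?_
      calc ∑ q ∈ (rla i).index, ∑ r ∈ (rlb j).index,
            S ((rla i).left q * (rlb j).left r) *
              ((((rla i).right q) * (rlb j).right r) *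
                (S (rb.right j) * S (ra.right i)))
          = (∑ q ∈ (rla i).index, ∑ r ∈ (rlb j).index,
              S ((rla i).left q * (rlb j).left r) *
                (((rla i).right q) * (rlb j).right r)) *
              (S (rb.right j) * S (ra.right i)) := by
            rw [Finset.sum_mul]
            refine Finset.sum_congr rfl fun q _ => ?_
            rw [Finset.sum_mul]
            exact Finset.sum_congr rfl fun r _ => by simp [mul_assoc]
        _ = algebraMap k H (Coalgebra.counit (R := k) (ra.left i * rb.left j)) *
              (S (rb.right j) * S (ra.right i)) := by
            congr 1
            rw [← Finset.sum_product', hSdef]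
            simpa [mulRepr] using HopfAlgebra.sum_antipode_mul_eq_algebraMap_counit (R := k)
              (mulRepr (rla i) (rlb j))
        _ = (Coalgebra.counit (R := k) (ra.left i) * Coalgebra.counit (R := k) (rb.left j)) •
              (S (rb.right j) * S (ra.right i)) := by
            rw [Bialgebra.counit_mul, ← Algebra.smul_def]
    have hSb : S b = ∑ j ∈ rb.index, Coalgebra.counit (R := k) (rb.left j) • S (rb.right j) := by
      conv_lhs => rw [← repr_sum_smul_left rb]
      rw [map_sum]
      exact Finset.sum_congr rfl fun j _ => by rw [map_smul]
    have hSa : S a = ∑ i ∈ ra.index, Coalgebra.counit (R := k) (ra.left i) • S (ra.right i) := by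
      conv_lhs => rw [← repr_sum_smul_left ra]
      rw [map_sum]
      exact Finset.sum_congr rfl fun i _ => by rw [map_smul]
    rw [hB3, hSb, hSa, Finset.sum_mul_sum, Finset.sum_comm]
    refine Finset.sum_congr rfl fun j _ => Finset.sum_congr rfl fun i _ => ?_
    rw [smul_mul_smul_comm, mul_comm (Coalgebra.counit (R := k) (ra.left i))]
  rw [← claimA, claimB]

end Helpers

section KI
variable {k H : Type*} [Field k] [Ring H] [HopfAlgebra k H]

variable {k H : Type*} [Field k] [Ring H] [HopfAlgebra k H]

/-- `∑ (S v₁ ⊗ 1) * Δ(v₂) = 1 ⊗ v`. -/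
lemma chi_collapse {v : H} {ιv : Type*} (rv : Coalgebra.Repr k v ιv) :
    ∑ m ∈ rv.index,
      (HopfAlgebra.antipode (R := k) (rv.left m) ⊗ₜ[k] (1:H)) *
        Coalgebra.comul (R := k) (rv.right m)
      = (1:H) ⊗ₜ[k] v := by
  have rl : ∀ i : rv.ι, Coalgebra.Repr k (rv.left i) (H × H) := fun i => ℛ k _
  have rr : ∀ i : rv.ι, Coalgebra.Repr k (rv.right i) (H × H) := fun i => ℛ k _
  set S : H →ₗ[k] H := HopfAlgebra.antipode (R := k) with hSdef
  set θ : H ⊗[k] (H ⊗[k] H) →ₗ[k] H ⊗[k] H :=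
    TensorProduct.lift ((LinearMap.rTensorHom H) ∘ₗ (LinearMap.mul k H) ∘ₗ S) with hθdef
  have hθ : ∀ (u v' w : H), θ (u ⊗ₜ[k] (v' ⊗ₜ[k] w)) = (S u * v') ⊗ₜ[k] w := by
    intro u v' w
    simp [hθdef]
  have hco := Coalgebra.sum_tmul_tmul_eq (R := k) rv rl rr
  have happ := congrArg θ hco
  rw [map_sum, map_sum] at happ
  simp only [map_sum, hθ] at happ
  calc ∑ m ∈ rv.index, (S (rv.left m) ⊗ₜ[k] (1:H)) * Coalgebra.comul (R := k) (rv.right m)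
      = ∑ m ∈ rv.index, ∑ p ∈ (rr m).index,
          (S (rv.left m) * (rr m).left p) ⊗ₜ[k] (rr m).right p := by
        refine Finset.sum_congr rfl fun m _ => ?_
        rw [← (rr m).eq, Finset.mul_sum]
        exact Finset.sum_congr rfl fun p _ => by
          rw [Algebra.TensorProduct.tmul_mul_tmul, one_mul]
    _ = ∑ m ∈ rv.index, ∑ q ∈ (rl m).index,
          (S ((rl m).left q) * (rl m).right q) ⊗ₜ[k] rv.right m := happ.symm
    _ = ∑ m ∈ rv.index,
          algebraMap k H (Coalgebra.counit (R := k) (rv.left m)) ⊗ₜ[k] rv.right m := by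
        refine Finset.sum_congr rfl fun m _ => ?_
        rw [← TensorProduct.sum_tmul, hSdef, HopfAlgebra.sum_antipode_mul_eq_algebraMap_counit (rl m)]
    _ = (1:H) ⊗ₜ[k] ∑ m ∈ rv.index, Coalgebra.counit (R := k) (rv.left m) • rv.right m := by
        rw [TensorProduct.tmul_sum]
        refine Finset.sum_congr rfl fun m _ => ?_
        rw [Algebra.algebraMap_eq_smul_one]
        exact TensorProduct.smul_tmul _ _ _
    _ = (1:H) ⊗ₜ[k] v := by rw [repr_sum_smul_left (k := k) rv]

/-- Key identity: for `b = (ν ⊗ id) Δ(P)`, `(1 ⊗ b) Δ(P) = (S b ⊗ 1) Δ(P)`,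
given `Δ(P)(1 ⊗ P) = P ⊗ P`. -/
lemma key_identity {P : H}
    (hgl1 : Coalgebra.comul (R := k) P * ((1 : H) ⊗ₜ[k] P) = P ⊗ₜ[k] P)
    {ιp : Type*} (rp : Coalgebra.Repr k P ιp) (ν : Module.Dual k H) :
    ((1:H) ⊗ₜ[k] (∑ i ∈ rp.index, ν (rp.left i) • rp.right i)) * Coalgebra.comul (R := k) P
      = (HopfAlgebra.antipode (R := k) (∑ i ∈ rp.index, ν (rp.left i) • rp.right i) ⊗ₜ[k] (1:H))
          * Coalgebra.comul (R := k) P := by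
  have rl : ∀ i : rp.ι, Coalgebra.Repr k (rp.left i) (H × H) := fun i => ℛ k _
  have rr : ∀ i : rp.ι, Coalgebra.Repr k (rp.right i) (H × H) := fun i => ℛ k _
  set S : H →ₗ[k] H := HopfAlgebra.antipode (R := k) with hSdef
  set T : H ⊗[k] H := Coalgebra.comul (R := k) P with hTdef
  -- I3
  have I3 : ∑ i ∈ rp.index, rp.left i ⊗ₜ[k] (Coalgebra.comul (R := k) (rp.right i) * T)
      = P ⊗ₜ[k] T := by
    have h := congrArg (Algebra.TensorProduct.map (AlgHom.id k H) (Bialgebra.comulAlgHom k H))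
      hgl1
    rw [map_mul] at h
    rw [show (Algebra.TensorProduct.map (AlgHom.id k H) (Bialgebra.comulAlgHom k H))
        ((1:H) ⊗ₜ[k] P) = (1:H) ⊗ₜ[k] T from by
      rw [Algebra.TensorProduct.map_tmul]; rfl] at h
    rw [show (Algebra.TensorProduct.map (AlgHom.id k H) (Bialgebra.comulAlgHom k H))
        (P ⊗ₜ[k] P) = P ⊗ₜ[k] T from by
      rw [Algebra.TensorProduct.map_tmul]; rfl] at h
    rw [show (Algebra.TensorProduct.map (AlgHom.id k H) (Bialgebra.comulAlgHom k H)) T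
        = ∑ i ∈ rp.index, rp.left i ⊗ₜ[k] Coalgebra.comul (R := k) (rp.right i) from by
      rw [hTdef, ← rp.eq, map_sum]
      exact Finset.sum_congr rfl fun i _ => by rw [Algebra.TensorProduct.map_tmul]; rfl] at h
    rw [← h, Finset.sum_mul]
    exact Finset.sum_congr rfl fun i _ => by
      rw [Algebra.TensorProduct.tmul_mul_tmul, mul_one]
  -- I4
  have I4 : ∑ i ∈ rp.index, Coalgebra.comul (R := k) (rp.left i) ⊗ₜ[k]
        (Coalgebra.comul (R := k) (rp.right i) * T)
      = T ⊗ₜ[k] T := by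
    have h := congrArg ((Coalgebra.comul (R := k) (A := H)).rTensor (H ⊗[k] H)) I3
    rw [map_sum] at h
    simpa [LinearMap.rTensor_tmul] using h
  -- the Ψν map
  set B₂ : H →ₗ[k] (H ⊗[k] H) →ₗ[k] (H ⊗[k] H) :=
    (LinearMap.mul k (H ⊗[k] H)) ∘ₗ (((TensorProduct.mk k H H).flip (1:H)) ∘ₗ S) with hB₂def
  have hB₂ : ∀ (v' : H) (ω : H ⊗[k] H), B₂ v' ω = (S v' ⊗ₜ[k] (1:H)) * ω := by
    intro v' ω; simp [hB₂def]
  set Ψ : (H ⊗[k] H) ⊗[k] (H ⊗[k] H) →ₗ[k] H ⊗[k] H :=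
    TensorProduct.lift (TensorProduct.lift (ν.smulRight B₂)) with hΨdef
  have hΨ : ∀ (u v' : H) (ω : H ⊗[k] H),
      Ψ ((u ⊗ₜ[k] v') ⊗ₜ[k] ω) = ν u • ((S v' ⊗ₜ[k] (1:H)) * ω) := by
    intro u v' ω; simp [hΨdef, hB₂]
  -- the Ω map
  set Ω : H ⊗[k] (H ⊗[k] H) →ₗ[k] H ⊗[k] H :=
    TensorProduct.lift (ν.smulRight (TensorProduct.lift
      (B₂.compl₂ ((LinearMap.mulRight k T) ∘ₗ (Coalgebra.comul (R := k) (A := H))))))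
    with hΩdef
  have hΩ : ∀ (u v' w : H), Ω (u ⊗ₜ[k] (v' ⊗ₜ[k] w))
      = ν u • ((S v' ⊗ₜ[k] (1:H)) * (Coalgebra.comul (R := k) w * T)) := by
    intro u v' w; simp [hΩdef, hB₂]
  -- apply Ψ to I4
  have hL := congrArg Ψ I4
  rw [map_sum] at hL
  have hLeval : ∀ i ∈ rp.index,
      Ψ (Coalgebra.comul (R := k) (rp.left i) ⊗ₜ[k]
          (Coalgebra.comul (R := k) (rp.right i) * T))
        = ∑ q ∈ (rl i).index, ν ((rl i).left q) •
            ((S ((rl i).right q) ⊗ₜ[k] (1:H)) *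
              (Coalgebra.comul (R := k) (rp.right i) * T)) := by
    intro i _
    rw [← (rl i).eq, TensorProduct.sum_tmul, map_sum]
    exact Finset.sum_congr rfl fun q _ => hΨ _ _ _
  rw [Finset.sum_congr rfl hLeval] at hL
  -- right side of hL
  have hTsum : T = ∑ i ∈ rp.index, rp.left i ⊗ₜ[k] rp.right i := by rw [hTdef, ← rp.eq]
  have hReval : Ψ (T ⊗ₜ[k] T)
      = ∑ j ∈ rp.index, ν (rp.left j) • ((S (rp.right j) ⊗ₜ[k] (1:H)) * T) := by
    rw [show T ⊗ₜ[k] T = ∑ j ∈ rp.index, (rp.left j ⊗ₜ[k] rp.right j) ⊗ₜ[k] T from by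
      nth_rewrite 1 [hTsum]
      rw [TensorProduct.sum_tmul], map_sum]
    exact Finset.sum_congr rfl fun j _ => hΨ _ _ _
  rw [hReval] at hL
  -- now use coassociativity to rewrite the left side of hL
  have hco := Coalgebra.sum_tmul_tmul_eq (R := k) rp rl rr
  have hΩco := congrArg Ω hco
  rw [map_sum, map_sum] at hΩco
  simp only [map_sum, hΩ] at hΩco
  -- left side of hΩco equals left side of hL
  have hLL : ∑ i ∈ rp.index, ∑ q ∈ (rl i).index, ν ((rl i).left q) •
      ((S ((rl i).right q) ⊗ₜ[k] (1:H)) * (Coalgebra.comul (R := k) (rp.right i) * T))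
      = ∑ i ∈ rp.index, ν (rp.left i) • (((1:H) ⊗ₜ[k] rp.right i) * T) := by
    rw [hΩco]
    refine Finset.sum_congr rfl fun i _ => ?_
    rw [← Finset.smul_sum]
    congr 1
    calc ∑ m ∈ (rr i).index,
          (S ((rr i).left m) ⊗ₜ[k] (1:H)) * (Coalgebra.comul (R := k) ((rr i).right m) * T)
        = (∑ m ∈ (rr i).index,
            (S ((rr i).left m) ⊗ₜ[k] (1:H)) * Coalgebra.comul (R := k) ((rr i).right m)) * T := by
          rw [Finset.sum_mul]
          exact Finset.sum_congr rfl fun m _ => by rw [mul_assoc]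
      _ = ((1:H) ⊗ₜ[k] rp.right i) * T := by rw [hSdef, chi_collapse (rr i)]
  rw [hLL] at hL
  -- conclude
  calc ((1:H) ⊗ₜ[k] (∑ i ∈ rp.index, ν (rp.left i) • rp.right i)) * T
      = ∑ i ∈ rp.index, ν (rp.left i) • (((1:H) ⊗ₜ[k] rp.right i) * T) := by
        rw [TensorProduct.tmul_sum, Finset.sum_mul]
        exact Finset.sum_congr rfl fun i _ => by
          rw [TensorProduct.tmul_smul, smul_mul_assoc]
    _ = ∑ j ∈ rp.index, ν (rp.left j) • ((S (rp.right j) ⊗ₜ[k] (1:H)) * T) := hL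
    _ = (S (∑ i ∈ rp.index, ν (rp.left i) • rp.right i) ⊗ₜ[k] (1:H)) * T := by
        rw [map_sum, TensorProduct.sum_tmul, Finset.sum_mul]
        refine (Finset.sum_congr rfl fun i _ => ?_).symm
        rw [map_smul, ← TensorProduct.smul_tmul', smul_mul_assoc]

end KI



universe u

section Support
variable {k M N : Type*} [Field k] [AddCommGroup M] [AddCommGroup N] [Module k M] [Module k N]

/-- the left support of a tensor: all contractions against duals in the right leg -/
noncomputable def leftSupport (t : M ⊗[k] N) : Submodule k M where
  carrier := {m | ∃ ν : Module.Dual k N,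
    m = TensorProduct.rid k M ((TensorProduct.map LinearMap.id ν) t)}
  add_mem' := by
    rintro a b ⟨ν1, rfl⟩ ⟨ν2, rfl⟩
    exact ⟨ν1 + ν2, by rw [TensorProduct.map_add_right, LinearMap.add_apply, map_add]⟩
  zero_mem' := ⟨0, by rw [TensorProduct.map_zero_right]; simp⟩
  smul_mem' := by
    rintro c a ⟨ν, rfl⟩
    exact ⟨c • ν, by rw [TensorProduct.map_smul_right, LinearMap.smul_apply, map_smul]⟩

lemma eq_zero_of_forall_contraction {Q : Type*} [AddCommGroup Q] [Module k Q]
    (s : Q ⊗[k] N)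
    (h : ∀ ν : Module.Dual k N,
      TensorProduct.rid k Q ((TensorProduct.map LinearMap.id ν) s) = 0) : s = 0 := by
  classical
  set B := Module.Basis.ofVectorSpace k N with hB
  set e : Q ⊗[k] N ≃ₗ[k] (Module.Basis.ofVectorSpaceIndex k N →₀ Q) :=
    (TensorProduct.congr (LinearEquiv.refl k Q) B.repr).trans
      (TensorProduct.finsuppScalarRight k k Q _) with he
  have key : ∀ (a : Module.Basis.ofVectorSpaceIndex k N) (u : Q ⊗[k] N),
      e u a = TensorProduct.rid k Q ((TensorProduct.map LinearMap.id (B.coord a)) u) := by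
    intro a u
    have : (Finsupp.lapply a) ∘ₗ (e : Q ⊗[k] N →ₗ[k] _)
        = (TensorProduct.rid k Q : Q ⊗[k] k →ₗ[k] Q) ∘ₗ
          (TensorProduct.map LinearMap.id (B.coord a)) := by
      apply TensorProduct.ext'
      intro q n
      simp [he, TensorProduct.finsuppScalarRight_apply_tmul_apply, Module.Basis.coord_apply]
    exact (LinearMap.congr_fun this u)
  have he0 : e s = 0 := by
    ext a
    rw [key a s, h (B.coord a)]
    rfl
  have := congrArg e.symm he0
  simpa using this

lemma mem_range_rTensor_leftSupport (t : M ⊗[k] N) :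
    t ∈ LinearMap.range ((leftSupport t).subtype.rTensor N) := by
  rw [← rTensor_mkQ (Q := N) (leftSupport t)]
  rw [LinearMap.mem_ker]
  apply eq_zero_of_forall_contraction
  intro ν
  have hcomm : (TensorProduct.rid k (M ⧸ leftSupport t) : _ →ₗ[k] _) ∘ₗ
      (TensorProduct.map LinearMap.id ν) ∘ₗ ((leftSupport t).mkQ.rTensor N)
      = (leftSupport t).mkQ ∘ₗ (TensorProduct.rid k M : M ⊗[k] k →ₗ[k] M) ∘ₗ
        (TensorProduct.map LinearMap.id ν) := by
    apply TensorProduct.ext'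
    intro m n
    simp
  have h0 := LinearMap.congr_fun hcomm t
  simp only [LinearMap.coe_comp, Function.comp_apply] at h0
  have h2 : (leftSupport t).mkQ ((TensorProduct.rid k M) ((TensorProduct.map LinearMap.id ν) t))
      = 0 := by
    rw [Submodule.mkQ_apply, Submodule.Quotient.mk_eq_zero]
    exact ⟨ν, rfl⟩
  exact h0.trans h2

lemma exists_good_decomp {M : Type u} [AddCommGroup M] [Module k M] (t : M ⊗[k] N) :
    ∃ (ιt : Type u) (s : Finset ιt) (x : ιt → M) (y : ιt → N),
      (∑ i ∈ s, x i ⊗ₜ[k] y i = t) ∧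
      (∀ i ∈ s, ∃ ν : Module.Dual k N,
        x i = TensorProduct.rid k M ((TensorProduct.map LinearMap.id ν) t)) ∧
      (∀ i ∈ s, ∃ ν : Module.Dual k M,
        y i = TensorProduct.lid k N ((TensorProduct.map ν LinearMap.id) t)) := by
  classical
  obtain ⟨t₁, ht₁⟩ := mem_range_rTensor_leftSupport t
  set B := Module.Basis.ofVectorSpace k (leftSupport t) with hB
  set e : (leftSupport t) ⊗[k] N ≃ₗ[k] (Module.Basis.ofVectorSpaceIndex k (leftSupport t) →₀ N) :=
    (TensorProduct.congr B.repr (LinearEquiv.refl k N)).trans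
      (TensorProduct.finsuppScalarLeft k N _) with he
  set F := e t₁ with hF
  have hkey : ∀ (a) (u : (leftSupport t) ⊗[k] N), e u a
      = TensorProduct.lid k N ((TensorProduct.map (B.coord a) LinearMap.id) u) := by
    intro a u
    have : (Finsupp.lapply a) ∘ₗ (e : (leftSupport t) ⊗[k] N →ₗ[k] _)
        = (TensorProduct.lid k N : k ⊗[k] N →ₗ[k] N) ∘ₗ
          (TensorProduct.map (B.coord a) LinearMap.id) := by
      apply TensorProduct.ext'
      intro w n
      simp [he, TensorProduct.finsuppScalarLeft_apply_tmul_apply, Module.Basis.coord_apply]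
    simpa using (LinearMap.congr_fun this u)
  have hdecomp : t₁ = ∑ a ∈ F.support, (B a : leftSupport t) ⊗ₜ[k] F a := by
    apply e.injective
    rw [map_sum]
    have hterm : ∀ a ∈ F.support, e ((B a : leftSupport t) ⊗ₜ[k] F a)
        = Finsupp.single a (F a) := by
      intro a _
      rw [show e ((B a : leftSupport t) ⊗ₜ[k] F a)
          = TensorProduct.finsuppScalarLeft k N _ ((B.repr (B a)) ⊗ₜ[k] F a) from by
        simp [he]]
      rw [B.repr_self, TensorProduct.finsuppScalarLeft_apply_tmul,
        Finsupp.sum_single_index (by simp), one_smul]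
    rw [Finset.sum_congr rfl hterm]
    exact (Finsupp.sum_single F).symm.trans rfl
  obtain ⟨C, hC⟩ := Submodule.exists_isCompl (leftSupport t)
  refine ⟨↥(Module.Basis.ofVectorSpaceIndex k (leftSupport t)), F.support,
    fun a => ((B a : leftSupport t) : M), fun a => F a, ?_, ?_, ?_⟩
  · conv_rhs => rw [← ht₁, hdecomp]
    rw [map_sum]
    exact Finset.sum_congr rfl fun a _ => by rw [LinearMap.rTensor_tmul]; rfl
  · intro a _
    exact (B a : leftSupport t).2
  · intro a _
    refine ⟨(B.coord a) ∘ₗ ((leftSupport t).linearProjOfIsCompl C hC), ?_⟩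
    have hcomp : (TensorProduct.map ((B.coord a) ∘ₗ
          ((leftSupport t).linearProjOfIsCompl C hC)) LinearMap.id) ∘ₗ
        ((leftSupport t).subtype.rTensor N) = TensorProduct.map (B.coord a) LinearMap.id := by
      apply TensorProduct.ext'
      intro w n
      simp [Submodule.linearProjOfIsCompl, Submodule.linearProjOfIsCompl_apply_left hC w]
    have h1 := congrArg (TensorProduct.lid k N) (LinearMap.congr_fun hcomp t₁)
    simp only [LinearMap.coe_comp, Function.comp_apply] at h1
    rw [ht₁] at h1
    rw [h1]
    exact hkey a t₁
end Support

section Semisimple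
variable {k : Type*} [Field k] {R : Type*} [Ring R] [Algebra k R]

lemma isSemisimpleRing_of_casimir (c : R ⊗[k] R)
    (hc : ∀ b : R, (LinearMap.mulLeft k b).rTensor R c = (LinearMap.mulRight k b).lTensor R c)
    (hmu : LinearMap.mul' k R c = 1) : IsSemisimpleRing R := by
  classical
  refine (isSemisimpleModule_iff _ _).mpr ⟨?_⟩
  intro N
  -- a k-linear projection onto N
  obtain ⟨q, hq⟩ := Submodule.exists_isCompl (N.restrictScalars k)
  set π : R →ₗ[k] ↥(N.restrictScalars k) :=
    (N.restrictScalars k).linearProjOfIsCompl q hq with hπ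
  set bil : R →ₗ[k] R →ₗ[k] R →ₗ[k] R := LinearMap.mk₂ k
    (fun u v => (LinearMap.mulLeft k u) ∘ₗ (Submodule.subtype _) ∘ₗ π ∘ₗ (LinearMap.mulLeft k v))
    (fun u u' v => by ext m; simp [add_mul, mul_add])
    (fun s u v => by ext m; simp [smul_mul_assoc, mul_smul_comm])
    (fun u v v' => by ext m; simp [add_mul, mul_add])
    (fun s u v => by ext m; simp [smul_mul_assoc, mul_smul_comm]) with hbil
  have hbil_apply : ∀ (u v m : R),
      TensorProduct.lift bil (u ⊗ₜ[k] v) m = u * ↑(π (v * m)) := by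
    intro u v m; simp [hbil]
  have hmem : ∀ (t : R ⊗[k] R) (m : R), TensorProduct.lift bil t m ∈ N := by
    intro t m
    induction t using TensorProduct.induction_on with
    | zero => simp only [map_zero, LinearMap.zero_apply]; exact N.zero_mem
    | tmul u v =>
      rw [hbil_apply]
      have hn : (↑(π (v * m)) : R) ∈ N := (π (v * m)).2
      simpa [smul_eq_mul] using N.smul_mem u hn
    | add t₁ t₂ h₁ h₂ =>
      rw [map_add, LinearMap.add_apply]
      exact N.add_mem h₁ h₂
  have hstepa : ∀ (s m : R) (t : R ⊗[k] R),
      s * TensorProduct.lift bil t m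
        = TensorProduct.lift bil ((LinearMap.mulLeft k s).rTensor R t) m := by
    intro s m t
    induction t using TensorProduct.induction_on with
    | zero => simp
    | tmul u v => rw [hbil_apply, LinearMap.rTensor_tmul, hbil_apply]; simp [mul_assoc]
    | add t₁ t₂ h₁ h₂ => simp only [map_add, LinearMap.add_apply, mul_add, h₁, h₂]
  have hstepb : ∀ (s m : R) (t : R ⊗[k] R),
      TensorProduct.lift bil ((LinearMap.mulRight k s).lTensor R t) m
        = TensorProduct.lift bil t (s * m) := by
    intro s m t
    induction t using TensorProduct.induction_on with
    | zero => simp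
    | tmul u v => rw [LinearMap.lTensor_tmul, hbil_apply, hbil_apply]; simp [mul_assoc]
    | add t₁ t₂ h₁ h₂ => simp only [map_add, LinearMap.add_apply, h₁, h₂]
  have hproj : ∀ (t : R ⊗[k] R) (n : R), n ∈ N →
      TensorProduct.lift bil t n = (LinearMap.mul' k R t) * n := by
    intro t n hn
    induction t using TensorProduct.induction_on with
    | zero => simp
    | tmul u v =>
      rw [hbil_apply, LinearMap.mul'_apply]
      have hvn : v * n ∈ N := by simpa [smul_eq_mul] using N.smul_mem v hn
      have : (↑(π (v * n)) : R) = v * n := by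
        have := Submodule.linearProjOfIsCompl_apply_left hq
          (⟨v * n, hvn⟩ : ↥(N.restrictScalars k))
        rw [hπ]
        exact congrArg (Subtype.val) this
      rw [this, mul_assoc]
    | add t₁ t₂ h₁ h₂ => simp only [map_add, LinearMap.add_apply, h₁, h₂, add_mul]
  refine ⟨LinearMap.ker (?_ : R →ₗ[R] ↥N), LinearMap.isCompl_of_proj ?_⟩
  · exact
      { toFun := fun m => ⟨TensorProduct.lift bil c m, hmem c m⟩
        map_add' := fun m₁ m₂ => Subtype.ext (by simp)
        map_smul' := fun s m => Subtype.ext (by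
          simp only [smul_eq_mul, RingHom.id_apply, SetLike.mk_smul_mk]
          rw [hstepa s m c, hc, hstepb]) }
  · intro x
    exact Subtype.ext (by
      simp only [LinearMap.coe_mk, AddHom.coe_mk]
      rw [hproj c x x.2, hmu, one_mul])

lemma isSemisimpleRing_mop_of_casimir (c : R ⊗[k] R)
    (hc : ∀ b : R, (LinearMap.mulLeft k b).rTensor R c = (LinearMap.mulRight k b).lTensor R c)
    (hmu : LinearMap.mul' k R c = 1) : IsSemisimpleRing Rᵐᵒᵖ := by
  classical
  refine (isSemisimpleModule_iff _ _).mpr ⟨?_⟩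
  intro N
  obtain ⟨q, hq⟩ := Submodule.exists_isCompl (N.restrictScalars k)
  set π : Rᵐᵒᵖ →ₗ[k] ↥(N.restrictScalars k) :=
    (N.restrictScalars k).linearProjOfIsCompl q hq with hπ
  set bil : R →ₗ[k] R →ₗ[k] Rᵐᵒᵖ →ₗ[k] Rᵐᵒᵖ := LinearMap.mk₂ k
    (fun u v => (LinearMap.mulLeft k (MulOpposite.op v)) ∘ₗ (Submodule.subtype _) ∘ₗ π ∘ₗ
      (LinearMap.mulLeft k (MulOpposite.op u)))
    (fun u u' v => by ext m; simp [add_mul, mul_add])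
    (fun s u v => by ext m; simp [smul_mul_assoc, mul_smul_comm])
    (fun u v v' => by ext m; simp [add_mul, mul_add])
    (fun s u v => by ext m; simp [smul_mul_assoc, mul_smul_comm]) with hbil
  have hbil_apply : ∀ (u v : R) (m : Rᵐᵒᵖ),
      TensorProduct.lift bil (u ⊗ₜ[k] v) m
        = MulOpposite.op v * ↑(π (MulOpposite.op u * m)) := by
    intro u v m; simp [hbil]
  have hmem : ∀ (t : R ⊗[k] R) (m : Rᵐᵒᵖ), TensorProduct.lift bil t m ∈ N := by
    intro t m
    induction t using TensorProduct.induction_on with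
    | zero => simp only [map_zero, LinearMap.zero_apply]; exact N.zero_mem
    | tmul u v =>
      rw [hbil_apply]
      have hn : (↑(π (MulOpposite.op u * m)) : Rᵐᵒᵖ) ∈ N := (π (MulOpposite.op u * m)).2
      simpa [smul_eq_mul] using N.smul_mem (MulOpposite.op v) hn
    | add t₁ t₂ h₁ h₂ =>
      rw [map_add, LinearMap.add_apply]
      exact N.add_mem h₁ h₂
  have hstepa : ∀ (s : R) (m : Rᵐᵒᵖ) (t : R ⊗[k] R),
      TensorProduct.lift bil t (MulOpposite.op s * m)
        = TensorProduct.lift bil ((LinearMap.mulLeft k s).rTensor R t) m := by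
    intro s m t
    induction t using TensorProduct.induction_on with
    | zero => simp
    | tmul u v =>
      rw [hbil_apply, LinearMap.rTensor_tmul, hbil_apply]
      simp only [LinearMap.mulLeft_apply, ← mul_assoc, ← MulOpposite.op_mul]
    | add t₁ t₂ h₁ h₂ => simp only [map_add, LinearMap.add_apply, h₁, h₂]
  have hstepb : ∀ (s : R) (m : Rᵐᵒᵖ) (t : R ⊗[k] R),
      TensorProduct.lift bil ((LinearMap.mulRight k s).lTensor R t) m
        = MulOpposite.op s * TensorProduct.lift bil t m := by
    intro s m t
    induction t using TensorProduct.induction_on with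
    | zero => simp
    | tmul u v =>
      rw [LinearMap.lTensor_tmul, hbil_apply, hbil_apply]
      simp only [LinearMap.mulRight_apply, MulOpposite.op_mul, mul_assoc]
    | add t₁ t₂ h₁ h₂ => simp only [map_add, LinearMap.add_apply, h₁, h₂, mul_add]
  have hproj : ∀ (t : R ⊗[k] R) (n : Rᵐᵒᵖ), n ∈ N →
      TensorProduct.lift bil t n = MulOpposite.op (LinearMap.mul' k R t) * n := by
    intro t n hn
    induction t using TensorProduct.induction_on with
    | zero => simp
    | tmul u v =>
      rw [hbil_apply, LinearMap.mul'_apply]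
      have hvn : MulOpposite.op u * n ∈ N := by
        simpa [smul_eq_mul] using N.smul_mem (MulOpposite.op u) hn
      have hcoe : (↑(π (MulOpposite.op u * n)) : Rᵐᵒᵖ) = MulOpposite.op u * n := by
        have := Submodule.linearProjOfIsCompl_apply_left hq
          (⟨MulOpposite.op u * n, hvn⟩ : ↥(N.restrictScalars k))
        rw [hπ]
        exact congrArg (Subtype.val) this
      rw [hcoe, ← mul_assoc, ← MulOpposite.op_mul]
    | add t₁ t₂ h₁ h₂ =>
      simp only [map_add, LinearMap.add_apply, h₁, h₂, MulOpposite.op_add, add_mul]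
  refine ⟨LinearMap.ker (?_ : Rᵐᵒᵖ →ₗ[Rᵐᵒᵖ] ↥N), LinearMap.isCompl_of_proj ?_⟩
  · exact
      { toFun := fun m => ⟨TensorProduct.lift bil c m, hmem c m⟩
        map_add' := fun m₁ m₂ => Subtype.ext (by simp)
        map_smul' := fun s m => Subtype.ext (by
          simp only [smul_eq_mul, RingHom.id_apply, SetLike.mk_smul_mk]
          rw [show s * m = MulOpposite.op s.unop * m from by rw [MulOpposite.op_unop],
            hstepa s.unop m c, hc, hstepb]
          rw [MulOpposite.op_unop]) }
  · intro x
    exact Subtype.ext (by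
      simp only [LinearMap.coe_mk, AddHom.coe_mk]
      rw [hproj c x x.2, hmu]
      simp)

end Semisimple

/-- Let `P` be a right group-like projection in a Hopf algebra `H` with
invertible antipode, let `VP` be the smallest left coideal containing `P`
(a unital subalgebra) and `PV` the smallest right coideal containing `P`.
Assume `VP` is Frobenius with cyclic element `y ∈ PV` (i.e. `a ↦ S(a)y` is a
bijection from `VP` onto `PV`), let `ι` be the inverse bijection
(`ι(S(a)y) = a`), and set `z = P₍₂₎ ι(P₍₁₎)`.  Then `z ∈ VP`, `z` is central in
`VP`, and if `z` is invertible in `VP` then every right `VP`-module is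
completely reducible; in particular `VP` is semisimple. -/
theorem group_like_projection_semisimple_of_invertible
    (k H : Type*) [Field k] [Ring H] [HopfAlgebra k H]
    (hS : Function.Bijective (HopfAlgebra.antipode (R := k) (A := H)))
    (P : H) (hP0 : P ≠ 0) (hPidem : IsIdempotentElem P)
    (hgl1 : Coalgebra.comul (R := k) P * ((1 : H) ⊗ₜ[k] P) = P ⊗ₜ[k] P)
    (hgl2 : ((1 : H) ⊗ₜ[k] P) * Coalgebra.comul (R := k) P = P ⊗ₜ[k] P)
    (VP : Subalgebra k H)
    (hVP : (VP : Set H) = {z : H | ∃ ν : Module.Dual k H,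
      z = (TensorProduct.lid k H)
        ((TensorProduct.map ν LinearMap.id) (Coalgebra.comul (R := k) P))})
    (PV : Set H)
    (hPV : PV = {z : H | ∃ ν : Module.Dual k H,
      z = (TensorProduct.rid k H)
        ((TensorProduct.map LinearMap.id ν) (Coalgebra.comul (R := k) P))})
    (y : H) (hy : y ∈ PV)
    (hcyc : Set.BijOn (fun a => HopfAlgebra.antipode (R := k) a * y) (VP : Set H) PV)
    (ι : H →ₗ[k] H) (hι : ∀ a ∈ VP, ι (HopfAlgebra.antipode (R := k) a * y) = a)
    (z : H)
    (hz : z = LinearMap.mul' k H ((TensorProduct.comm k H H)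
      ((TensorProduct.map ι LinearMap.id) (Coalgebra.comul (R := k) P)))) :
    z ∈ VP ∧
    (∀ b ∈ VP, b * z = z * b) ∧
    ((∃ w ∈ VP, z * w = 1 ∧ w * z = 1) →
      IsSemisimpleRing (↥VP)ᵐᵒᵖ ∧ IsSemisimpleRing ↥VP) := by
  classical
  obtain ⟨ιt, s, x, yy, hsum, hxmem, hymem⟩ :=
    exists_good_decomp (k := k) (Coalgebra.comul (R := k) P)
  -- memberships
  have hxPV : ∀ i ∈ s, x i ∈ PV := by
    intro i hi; rw [hPV]; exact hxmem i hi
  have hyVP : ∀ i ∈ s, yy i ∈ VP := by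
    intro i hi
    have : yy i ∈ (VP : Set H) := by rw [hVP]; exact hymem i hi
    exact this
  -- facts about ι on PV
  have hιfull : ∀ u ∈ PV, ∃ a, a ∈ VP ∧ u = HopfAlgebra.antipode (R := k) a * y ∧ ι u = a := by
    intro u hu
    obtain ⟨a, haVP, ha⟩ := hcyc.2.2 hu
    exact ⟨a, haVP, ha.symm, by rw [← ha]; exact hι a haVP⟩
  have hιmem : ∀ u ∈ PV, ι u ∈ VP := by
    intro u hu
    obtain ⟨a, haVP, _, hia⟩ := hιfull u hu
    rw [hia]; exact haVP
  have hmod : ∀ u ∈ PV, ∀ b ∈ VP, ι (HopfAlgebra.antipode (R := k) b * u) = ι u * b := by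
    intro u hu b hb
    obtain ⟨a, haVP, hau, hia⟩ := hιfull u hu
    rw [hau, ← mul_assoc, ← antipode_mul' (k := k) a b, hι (a * b) (VP.mul_mem haVP hb),
      hι a haVP]
  -- z as a sum
  have hzsum : z = ∑ i ∈ s, yy i * ι (x i) := by
    rw [hz, ← hsum, map_sum, map_sum, map_sum]
    exact Finset.sum_congr rfl fun i _ => by
      rw [TensorProduct.map_tmul, TensorProduct.comm_tmul, LinearMap.mul'_apply]
      rfl
  -- z ∈ VP
  have hzVP : z ∈ VP := by
    rw [hzsum]
    exact Subalgebra.sum_mem VP fun i hi => VP.mul_mem (hyVP i hi) (hιmem _ (hxPV i hi))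
  -- key identity, specialized
  have hKI : ∀ b ∈ VP, ((1:H) ⊗ₜ[k] b) * Coalgebra.comul (R := k) P
      = (HopfAlgebra.antipode (R := k) b ⊗ₜ[k] (1:H)) * Coalgebra.comul (R := k) P := by
    intro b hb
    have hb' : b ∈ (VP : Set H) := hb
    rw [hVP] at hb'
    obtain ⟨ν, hν⟩ := hb'
    have hbform : b = ∑ i ∈ s, ν (x i) • yy i := by
      rw [hν, ← hsum, map_sum, map_sum]
      exact Finset.sum_congr rfl fun i _ => by
        rw [TensorProduct.map_tmul, TensorProduct.lid_tmul]
        rfl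
    have := key_identity (k := k) hgl1 ⟨s, x, yy, hsum⟩ ν
    rw [hbform]
    exact this
  -- expansion helpers
  have hexp1 : ∀ b : H, ((1:H) ⊗ₜ[k] b) * Coalgebra.comul (R := k) P
      = ∑ i ∈ s, x i ⊗ₜ[k] (b * yy i) := by
    intro b
    rw [← hsum, Finset.mul_sum]
    exact Finset.sum_congr rfl fun i _ => by
      rw [Algebra.TensorProduct.tmul_mul_tmul, one_mul]
  have hexp2 : ∀ b : H, (b ⊗ₜ[k] (1:H)) * Coalgebra.comul (R := k) P
      = ∑ i ∈ s, (b * x i) ⊗ₜ[k] yy i := by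
    intro b
    rw [← hsum, Finset.mul_sum]
    exact Finset.sum_congr rfl fun i _ => by
      rw [Algebra.TensorProduct.tmul_mul_tmul, one_mul]
  -- the M-identity
  have hM : ∀ b ∈ VP, ∑ i ∈ s, (ι (x i) * b) ⊗ₜ[k] yy i
      = ∑ i ∈ s, ι (x i) ⊗ₜ[k] (b * yy i) := by
    intro b hb
    calc ∑ i ∈ s, (ι (x i) * b) ⊗ₜ[k] yy i
        = ∑ i ∈ s, ι (HopfAlgebra.antipode (R := k) b * x i) ⊗ₜ[k] yy i :=
          Finset.sum_congr rfl fun i hi => by rw [hmod (x i) (hxPV i hi) b hb]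
      _ = (TensorProduct.map ι LinearMap.id)
            (∑ i ∈ s, (HopfAlgebra.antipode (R := k) b * x i) ⊗ₜ[k] yy i) := by
          rw [map_sum]
          exact Finset.sum_congr rfl fun i _ => by rw [TensorProduct.map_tmul]; rfl
      _ = (TensorProduct.map ι LinearMap.id)
            ((HopfAlgebra.antipode (R := k) b ⊗ₜ[k] (1:H)) * Coalgebra.comul (R := k) P) := by
          rw [hexp2]
      _ = (TensorProduct.map ι LinearMap.id)
            (((1:H) ⊗ₜ[k] b) * Coalgebra.comul (R := k) P) := by rw [hKI b hb]
      _ = (TensorProduct.map ι LinearMap.id) (∑ i ∈ s, x i ⊗ₜ[k] (b * yy i)) := by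
          rw [hexp1]
      _ = ∑ i ∈ s, ι (x i) ⊗ₜ[k] (b * yy i) := by
          rw [map_sum]
          exact Finset.sum_congr rfl fun i _ => by rw [TensorProduct.map_tmul]; rfl
  -- centrality
  have hcentral : ∀ b ∈ VP, b * z = z * b := by
    intro b hb
    have h := congrArg (fun t => LinearMap.mul' k H ((TensorProduct.comm k H H) t)) (hM b hb)
    simp only [map_sum, TensorProduct.comm_tmul, LinearMap.mul'_apply] at h
    have hL : ∑ i ∈ s, yy i * (ι (x i) * b) = z * b := by
      rw [hzsum, Finset.sum_mul]
      exact Finset.sum_congr rfl fun i _ => by rw [mul_assoc]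
    have hR : ∑ i ∈ s, (b * yy i) * ι (x i) = b * z := by
      rw [hzsum, Finset.mul_sum]
      exact Finset.sum_congr rfl fun i _ => by rw [mul_assoc]
    rw [← hR, ← h, hL]
  refine ⟨hzVP, hcentral, ?_⟩
  rintro ⟨w, hwVP, hzw, hwz⟩
  -- w commutes with VP
  have hwb : ∀ b ∈ VP, w * b = b * w := by
    intro b hb
    calc w * b = w * (b * (z * w)) := by rw [hzw, mul_one]
      _ = w * (b * z * w) := by rw [mul_assoc b z w]
      _ = w * (z * b * w) := by rw [← hcentral b hb]
      _ = w * (z * (b * w)) := by rw [mul_assoc z b w]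
      _ = w * z * (b * w) := by rw [mul_assoc]
      _ = b * w := by rw [hwz, one_mul]
  -- build the Casimir element in VP ⊗ VP
  set Vval : ↥VP →ₗ[k] H := (Subalgebra.val VP).toLinearMap with hVval
  set c : ↥VP ⊗[k] ↥VP := ∑ i ∈ s.attach,
    (⟨yy i, hyVP i i.2⟩ : ↥VP) ⊗ₜ[k]
      (⟨ι (x i) * w, VP.mul_mem (hιmem _ (hxPV i i.2)) hwVP⟩ : ↥VP) with hc_def
  -- injectivity of the coercion on tensors
  have hinj : Function.Injective (TensorProduct.map Vval Vval) := by
    have h1 : Function.Injective (Vval.lTensor ↥VP) :=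
      Module.Flat.lTensor_preserves_injective_linearMap Vval Subtype.val_injective
    have h2 : Function.Injective (Vval.rTensor H) :=
      Module.Flat.rTensor_preserves_injective_linearMap Vval Subtype.val_injective
    have hcomp : (Vval.rTensor H) ∘ₗ (Vval.lTensor ↥VP) = TensorProduct.map Vval Vval := by
      apply TensorProduct.ext'
      intro a b
      simp
    rw [← hcomp, LinearMap.coe_comp]
    exact h2.comp h1
  -- compute the images
  have himg : TensorProduct.map Vval Vval c = ∑ i ∈ s, yy i ⊗ₜ[k] (ι (x i) * w) := by
    rw [hc_def, map_sum, ← Finset.sum_attach s (fun i => yy i ⊗ₜ[k] (ι (x i) * w))]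
    exact Finset.sum_congr rfl fun i _ => by rw [TensorProduct.map_tmul]; rfl
  -- Casimir property
  have hcas : ∀ b : ↥VP, (LinearMap.mulLeft k b).rTensor ↥VP c
      = (LinearMap.mulRight k b).lTensor ↥VP c := by
    intro b
    apply hinj
    have hL : TensorProduct.map Vval Vval ((LinearMap.mulLeft k b).rTensor ↥VP c)
        = ∑ i ∈ s, ((b : H) * yy i) ⊗ₜ[k] (ι (x i) * w) := by
      rw [hc_def, map_sum, map_sum,
        ← Finset.sum_attach s (fun i => ((b : H) * yy i) ⊗ₜ[k] (ι (x i) * w))]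
      exact Finset.sum_congr rfl fun i _ => by
        rw [LinearMap.rTensor_tmul, TensorProduct.map_tmul]
        rfl
    have hR : TensorProduct.map Vval Vval ((LinearMap.mulRight k b).lTensor ↥VP c)
        = ∑ i ∈ s, yy i ⊗ₜ[k] (ι (x i) * w * (b : H)) := by
      rw [hc_def, map_sum, map_sum,
        ← Finset.sum_attach s (fun i => yy i ⊗ₜ[k] (ι (x i) * w * (b : H)))]
      exact Finset.sum_congr rfl fun i _ => by
        rw [LinearMap.lTensor_tmul, TensorProduct.map_tmul]
        rfl
    rw [hL, hR]
    -- H-level identity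
    have h := congrArg (fun t => (LinearMap.mulRight k w).lTensor H
      ((TensorProduct.comm k H H) t)) (hM (b : H) b.2)
    simp only [map_sum, TensorProduct.comm_tmul, LinearMap.lTensor_tmul,
      LinearMap.mulRight_apply] at h
    -- h : ∑ yy i ⊗ (ι (x i) * b * w) = ∑ (b * yy i) ⊗ (ι (x i) * w)
    rw [show ∑ i ∈ s, yy i ⊗ₜ[k] (ι (x i) * w * (b : H))
        = ∑ i ∈ s, yy i ⊗ₜ[k] (ι (x i) * (b : H) * w) from
      Finset.sum_congr rfl fun i _ => by
        rw [mul_assoc, hwb (b : H) b.2, ← mul_assoc]]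
    exact h.symm
  -- multiplication property
  have hmu : LinearMap.mul' k ↥VP c = 1 := by
    have : Vval (LinearMap.mul' k ↥VP c) = Vval 1 := by
      rw [hc_def, map_sum, map_sum]
      have : ∑ i ∈ s.attach, Vval (LinearMap.mul' k ↥VP
          ((⟨yy i, hyVP i i.2⟩ : ↥VP) ⊗ₜ[k]
            (⟨ι (x i) * w, VP.mul_mem (hιmem _ (hxPV i i.2)) hwVP⟩ : ↥VP)))
          = ∑ i ∈ s, yy i * (ι (x i) * w) := by
        rw [← Finset.sum_attach s (fun i => yy i * (ι (x i) * w))]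
        exact Finset.sum_congr rfl fun i _ => by rw [LinearMap.mul'_apply]; rfl
      rw [this]
      have : ∑ i ∈ s, yy i * (ι (x i) * w) = z * w := by
        rw [hzsum, Finset.sum_mul]
        exact Finset.sum_congr rfl fun i _ => by rw [mul_assoc]
      rw [this, hzw]
      rfl
    exact Subtype.val_injective this
  exact ⟨isSemisimpleRing_mop_of_casimir (k := k) c hcas hmu,
    isSemisimpleRing_of_casimir (k := k) c hcas hmu⟩
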